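/- Assume the inductive setting, with f an element of Sym(Z), and let V be the subgroup of Sym(Z) generated by H₁ together with f. Then V equals the subgroup generated by M ∪ {f}, M is a normal subgroup of V, every element of V can be written as fⁿ·m with n ∈ ℤ and m ∈ M, the intersection of M with the cyclic subgroup ⟨f⟩ is trivial, and f has infinite order; thus V is the internal semidirect product of M with the infinite cyclic group generated by f. -/

import Mathlib

/-- A pre-wreath structure `(Z, Y, H, X)`: `H` is a nontrivial subgroup of `Sym(Z)`,
`X ⊆ Y ⊆ Z`, `X` nonempty, every element of `H` fixes every point outside `Y`,
if `Xh` meets `X` then `h` is the identity on `X`, and every nontrivial `h ∈ H`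
moves some set `Xj` (`j ∈ H`). (Images are written with Lean's left action, so the
set `Xh` of the paper is `⇑h '' X`.) -/
def IsPreWreath {Z : Type*} (Y : Set Z) (H : Subgroup (Equiv.Perm Z)) (X : Set Z) : Prop :=
  H ≠ ⊥ ∧
  (∀ h ∈ H, ∀ z : Z, z ∉ Y → h z = z) ∧
  X ⊆ Y ∧
  X.Nonempty ∧
  (∀ h ∈ H, (⇑h '' X ∩ X).Nonempty → ∀ x ∈ X, h x = x) ∧
  (∀ h ∈ H, h ≠ 1 → ∃ j ∈ H, ⇑h '' (⇑j '' X) ≠ ⇑j '' X)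

/-- The carrier `XH = {Xh : h ∈ H}` of a pre-wreath structure. -/
def wreathCarrier {Z : Type*} (H : Subgroup (Equiv.Perm Z)) (X : Set Z) : Set (Set Z) :=
  {A : Set Z | ∃ h ∈ H, A = ⇑h '' X}

/-- The support of a subgroup of `Sym(Z)`: the points moved by some element. -/
def Supp {Z : Type*} (K : Subgroup (Equiv.Perm Z)) : Set Z :=
  {z : Z | ∃ g ∈ K, g z ≠ z}

/-- The inductive setting: `(Z, fY₀, H₁, Y₀)` is a pre-wreath structure (`Y₁ = Y₀f` is
the image of `Y₀` under the bijection `f`), `Y₀ ⊆ Supp(H₁) ⊆ Y₁` with `Supp(H₁) ≠ Y₁`,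
and `W₀` is a nonempty subset of `Y₀` whose image under `f` misses `Supp(H₁)`. -/
def InductiveSetting {Z : Type*} (H₁ : Subgroup (Equiv.Perm Z)) (f : Equiv.Perm Z)
    (Y₀ W₀ : Set Z) : Prop :=
  IsPreWreath (⇑f '' Y₀) H₁ Y₀ ∧
  Y₀ ⊆ Supp H₁ ∧ Supp H₁ ⊆ ⇑f '' Y₀ ∧ Supp H₁ ≠ ⇑f '' Y₀ ∧
  W₀.Nonempty ∧ W₀ ⊆ Y₀ ∧ (⇑f '' W₀) ∩ Supp H₁ = ∅

/-- `Hᵢ`, the conjugate of `H₁` carried over by `f^(i-1)`: this is the paper's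
`f^{-(i-1)} H₁ f^{i-1}` written in right-action notation, i.e. the subgroup
`{f^(i-1) h f^(-(i-1)) : h ∈ H₁}` of permutations acting on the left. -/
def Hseq {Z : Type*} (H₁ : Subgroup (Equiv.Perm Z)) (f : Equiv.Perm Z) (i : ℤ) :
    Subgroup (Equiv.Perm Z) :=
  Subgroup.map (MulAut.conj (f ^ (i - 1))).toMonoidHom H₁

/-- `R_j`, the subgroup generated by the `Hᵢ` with `i ≥ j`. -/
def Rseq {Z : Type*} (H₁ : Subgroup (Equiv.Perm Z)) (f : Equiv.Perm Z) (j : ℤ) :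
    Subgroup (Equiv.Perm Z) :=
  Subgroup.closure (⋃ i ∈ {i : ℤ | j ≤ i}, (Hseq H₁ f i : Set (Equiv.Perm Z)))

/-- `Lᵢ`, the subgroup generated by the `H_j` with `j < i`. -/
def Lseq {Z : Type*} (H₁ : Subgroup (Equiv.Perm Z)) (f : Equiv.Perm Z) (i : ℤ) :
    Subgroup (Equiv.Perm Z) :=
  Subgroup.closure (⋃ j ∈ {j : ℤ | j < i}, (Hseq H₁ f j : Set (Equiv.Perm Z)))

/-- `M`, the subgroup generated by all the `Hᵢ`, `i ∈ ℤ`. -/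
def Mgrp {Z : Type*} (H₁ : Subgroup (Equiv.Perm Z)) (f : Equiv.Perm Z) :
    Subgroup (Equiv.Perm Z) :=
  Subgroup.closure (⋃ i : ℤ, (Hseq H₁ f i : Set (Equiv.Perm Z)))

/-- `Wᵢ = W₀fⁱ`, the image of `W₀` under the `i`-th power of `f`. -/
def Wseq {Z : Type*} (W₀ : Set Z) (f : Equiv.Perm Z) (i : ℤ) : Set Z :=
  ⇑(f ^ i) '' W₀

namespace Stmt14Aux

open Subgroup

variable {Z : Type*} (H₁ : Subgroup (Equiv.Perm Z)) (f : Equiv.Perm Z)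

theorem mem_hseq {i : ℤ} {x : Equiv.Perm Z} :
    x ∈ Hseq H₁ f i ↔ ∃ h ∈ H₁, f ^ (i - 1) * h * (f ^ (i - 1))⁻¹ = x := by
  simp only [Hseq, Subgroup.mem_map, MulEquiv.coe_toMonoidHom, MulAut.conj_apply]

theorem hseq_le_M (i : ℤ) : Hseq H₁ f i ≤ Mgrp H₁ f := by
  intro x hx
  exact Subgroup.subset_closure (Set.mem_iUnion.2 ⟨i, hx⟩)

theorem H₁_le_M : H₁ ≤ Mgrp H₁ f := by
  intro h hh
  exact hseq_le_M H₁ f 1 ((mem_hseq H₁ f).2 ⟨h, hh, by simp⟩)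

theorem conj_hseq {i : ℤ} {x : Equiv.Perm Z} (hx : x ∈ Hseq H₁ f i) :
    f * x * f⁻¹ ∈ Hseq H₁ f (i + 1) := by
  obtain ⟨h, hh, rfl⟩ := (mem_hseq H₁ f).1 hx
  exact (mem_hseq H₁ f).2 ⟨h, hh, by group⟩

theorem conj_hseq_inv {i : ℤ} {x : Equiv.Perm Z} (hx : x ∈ Hseq H₁ f i) :
    f⁻¹ * x * f ∈ Hseq H₁ f (i - 1) := by
  obtain ⟨h, hh, rfl⟩ := (mem_hseq H₁ f).1 hx
  exact (mem_hseq H₁ f).2 ⟨h, hh, by group⟩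

theorem conj_M {x : Equiv.Perm Z} (hx : x ∈ Mgrp H₁ f) : f * x * f⁻¹ ∈ Mgrp H₁ f := by
  refine Subgroup.closure_induction (fun y hy => ?_) (by simpa using one_mem (Mgrp H₁ f)) (fun a b _ _ ha hb => ?_)
    (fun a _ ha => ?_) hx
  · obtain ⟨i, hi⟩ := Set.mem_iUnion.1 hy
    exact hseq_le_M H₁ f (i + 1) (conj_hseq H₁ f hi)
  · have : f * (a * b) * f⁻¹ = (f * a * f⁻¹) * (f * b * f⁻¹) := by group
    rw [this]; exact mul_mem ha hb
  · have : f * a⁻¹ * f⁻¹ = (f * a * f⁻¹)⁻¹ := by group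
    rw [this]; exact inv_mem ha

theorem conj_M_inv {x : Equiv.Perm Z} (hx : x ∈ Mgrp H₁ f) : f⁻¹ * x * f ∈ Mgrp H₁ f := by
  refine Subgroup.closure_induction (fun y hy => ?_) (by simpa using one_mem (Mgrp H₁ f)) (fun a b _ _ ha hb => ?_)
    (fun a _ ha => ?_) hx
  · obtain ⟨i, hi⟩ := Set.mem_iUnion.1 hy
    exact hseq_le_M H₁ f (i - 1) (conj_hseq_inv H₁ f hi)
  · have : f⁻¹ * (a * b) * f = (f⁻¹ * a * f) * (f⁻¹ * b * f) := by group
    rw [this]; exact mul_mem ha hb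
  · have : f⁻¹ * a⁻¹ * f = (f⁻¹ * a * f)⁻¹ := by group
    rw [this]; exact inv_mem ha

theorem f_mem_normalizer : f ∈ Subgroup.normalizer (Mgrp H₁ f : Set (Equiv.Perm Z)) := by
  rw [Subgroup.mem_normalizer_iff]
  intro h
  constructor
  · exact fun hh => conj_M H₁ f hh
  · intro hh
    have := conj_M_inv H₁ f hh
    have e : f⁻¹ * (f * h * f⁻¹) * f = h := by group
    rwa [e] at this

theorem zpow_conj_M (c : ℤ) {m : Equiv.Perm Z} (hm : m ∈ Mgrp H₁ f) :
    f ^ c * m * (f ^ c)⁻¹ ∈ Mgrp H₁ f := by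
  have hfc : f ^ c ∈ Subgroup.normalizer (Mgrp H₁ f : Set (Equiv.Perm Z)) := zpow_mem (f_mem_normalizer H₁ f) c
  exact (Subgroup.mem_normalizer_iff.1 hfc m).1 hm

theorem M_le_V : Mgrp H₁ f ≤ H₁ ⊔ Subgroup.zpowers f := by
  refine Subgroup.closure_le _ |>.2 ?_
  intro x hx
  obtain ⟨i, hi⟩ := Set.mem_iUnion.1 hx
  obtain ⟨h, hh, rfl⟩ := (mem_hseq H₁ f).1 hi
  have h1 : (h : Equiv.Perm Z) ∈ H₁ ⊔ Subgroup.zpowers f :=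
    Subgroup.mem_sup_left hh
  have h2 : f ^ (i - 1) ∈ H₁ ⊔ Subgroup.zpowers f :=
    Subgroup.mem_sup_right (Subgroup.zpow_mem _ (Subgroup.mem_zpowers f) _)
  exact mul_mem (mul_mem h2 h1) (inv_mem h2)

/-! ### Analytic lemmas -/

theorem image_zpow_add (a b : ℤ) (S : Set Z) :
    ⇑(f ^ (a + b)) '' S = ⇑(f ^ a) '' (⇑(f ^ b) '' S) := by
  rw [zpow_add, Equiv.Perm.coe_mul, Set.image_comp]

variable {Y₀ W₀ : Set Z}

theorem Ymono (h01 : Y₀ ⊆ ⇑f '' Y₀) {a b : ℤ} (hab : a ≤ b) :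
    ⇑(f ^ a) '' Y₀ ⊆ ⇑(f ^ b) '' Y₀ := by
  have step : ∀ c : ℤ, ⇑(f ^ c) '' Y₀ ⊆ ⇑(f ^ (c + 1)) '' Y₀ := by
    intro c
    rw [image_zpow_add f c 1]
    simp only [zpow_one]
    exact Set.image_mono h01
  exact Int.le_induction (motive := fun c _ => ⇑(f ^ a) '' Y₀ ⊆ ⇑(f ^ c) '' Y₀)
    subset_rfl (fun n _ ih => ih.trans (step n)) b hab

theorem Wdisj_prev (hY₀supp : Y₀ ⊆ Supp H₁) (hW₁ : (⇑f '' W₀) ∩ Supp H₁ = ∅)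
    {j : ℤ} {w : Z} (hw : w ∈ Wseq W₀ f j) (hw' : w ∈ ⇑(f ^ (j - 1)) '' Y₀) : False := by
  obtain ⟨w₀, hw₀, rfl⟩ := hw
  obtain ⟨y, hy, hy'⟩ := hw'
  have hj : (f ^ j) w₀ = (f ^ (j - 1)) (f w₀) := by
    have : f ^ j = f ^ (j - 1) * f := by group
    rw [this, Equiv.Perm.mul_apply]
  rw [hj] at hy'
  have hfw : f w₀ = y := (f ^ (j - 1)).injective hy'.symm
  have : f w₀ ∈ (⇑f '' W₀) ∩ Supp H₁ := ⟨⟨w₀, hw₀, rfl⟩, hfw ▸ hY₀supp hy⟩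
  rw [hW₁] at this
  exact this

theorem Wsupp (hY₀supp : Y₀ ⊆ Supp H₁) (hsuppY₁ : Supp H₁ ⊆ ⇑f '' Y₀)
    (hW₁ : (⇑f '' W₀) ∩ Supp H₁ = ∅) {j : ℤ} (hj : 1 ≤ j)
    {w : Z} (hw : w ∈ Wseq W₀ f j) {g : Equiv.Perm Z} (hg : g ∈ H₁) : g w = w := by
  by_contra hne
  have hwsupp : w ∈ Supp H₁ := ⟨g, hg, hne⟩
  rcases eq_or_lt_of_le hj with h1 | h2
  · -- j = 1
    have : w ∈ ⇑f '' W₀ := by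
      rw [← h1] at hw
      simpa [Wseq, zpow_one] using hw
    have : w ∈ (⇑f '' W₀) ∩ Supp H₁ := ⟨this, hwsupp⟩
    rw [hW₁] at this; exact this
  · -- j ≥ 2
    have hY1 : w ∈ ⇑(f ^ (1 : ℤ)) '' Y₀ := by
      simpa [zpow_one] using hsuppY₁ hwsupp
    have : w ∈ ⇑(f ^ (j - 1)) '' Y₀ :=
      Ymono f (hY₀supp.trans hsuppY₁) (by omega) hY1
    exact Wdisj_prev H₁ f hY₀supp hW₁ hw this

theorem fixW (hY₀supp : Y₀ ⊆ Supp H₁) (hsuppY₁ : Supp H₁ ⊆ ⇑f '' Y₀)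
    (hW₁ : (⇑f '' W₀) ∩ Supp H₁ = ∅) {k i : ℤ} (hk : 1 ≤ k) (hik : i ≤ k)
    {h : Equiv.Perm Z} (hh : h ∈ Hseq H₁ f i) {w : Z} (hw : w ∈ Wseq W₀ f k) :
    h w = w := by
  obtain ⟨h₁, hh₁, rfl⟩ := (mem_hseq H₁ f).1 hh
  have hdecomp : w ∈ ⇑(f ^ (i - 1)) '' (⇑(f ^ (k - i + 1)) '' W₀) := by
    rw [← image_zpow_add f (i - 1) (k - i + 1)]
    have : i - 1 + (k - i + 1) = k := by ring
    rw [this]; exact hw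
  obtain ⟨u, hu, rfl⟩ := hdecomp
  have hfix : h₁ u = u :=
    Wsupp H₁ f hY₀supp hsuppY₁ hW₁ (by omega) hu hh₁
  simp only [Equiv.Perm.mul_apply]
  rw [show (f ^ (i - 1))⁻¹ ((f ^ (i - 1)) u) = u from Equiv.symm_apply_apply _ _, hfix]

theorem M_le_iSup_L : Mgrp H₁ f ≤ ⨆ N : ℤ, Lseq H₁ f N := by
  refine Subgroup.closure_le _ |>.2 ?_
  intro x hx
  obtain ⟨i, hi⟩ := Set.mem_iUnion.1 hx
  have : x ∈ Lseq H₁ f (i + 1) :=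
    Subgroup.subset_closure (Set.mem_biUnion (by simp : i ∈ {j : ℤ | j < i + 1}) hi)
  exact le_iSup (fun N => Lseq H₁ f N) (i + 1) this

/-- The subgroup of permutations fixing every point of `W`. -/
def fixSub (W : Set Z) : Subgroup (Equiv.Perm Z) where
  carrier := {g : Equiv.Perm Z | ∀ w ∈ W, g w = w}
  one_mem' := fun w _ => rfl
  mul_mem' := by
    intro a b ha hb w hw
    simp only [Equiv.Perm.mul_apply]
    rw [hb w hw, ha w hw]
  inv_mem' := by
    intro a ha w hw
    have := ha w hw
    exact a.injective (by rw [show a (a⁻¹ w) = w from Equiv.apply_symm_apply _ _, this])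

theorem fn_not_mem_M (hY₀supp : Y₀ ⊆ Supp H₁) (hsuppY₁ : Supp H₁ ⊆ ⇑f '' Y₀)
    (hW₀ne : W₀.Nonempty) (hW₀Y₀ : W₀ ⊆ Y₀)
    (hW₁ : (⇑f '' W₀) ∩ Supp H₁ = ∅) {n : ℤ} (hn : 0 < n) :
    f ^ n ∉ Mgrp H₁ f := by
  intro hmem
  have hdir : Directed (· ≤ ·) (fun N : ℤ => Lseq H₁ f N) := by
    have hmono : Monotone (fun N : ℤ => Lseq H₁ f N) := by
      intro a b hab
      refine Subgroup.closure_mono ?_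
      refine Set.iUnion₂_subset fun j hj => ?_
      have hjb : j ∈ {j : ℤ | j < b} := by
        simp only [Set.mem_setOf_eq] at hj ⊢
        omega
      exact Set.subset_biUnion_of_mem (u := fun j => (Hseq H₁ f j : Set (Equiv.Perm Z))) hjb
    exact hmono.directed_le
  obtain ⟨N, hN⟩ := (Subgroup.mem_iSup_of_directed hdir).1 (M_le_iSup_L H₁ f hmem)
  set k : ℤ := max N 1 with hk
  have hfix : f ^ n ∈ fixSub (Wseq W₀ f k) := by
    have hle : Lseq H₁ f N ≤ fixSub (Wseq W₀ f k) := by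
      refine Subgroup.closure_le _ |>.2 ?_
      intro x hx
      obtain ⟨j, hjmem, hj⟩ := Set.mem_iUnion₂.1 hx
      intro w hw
      exact fixW H₁ f hY₀supp hsuppY₁ hW₁ (le_max_right N 1)
        (by simp only [Set.mem_setOf_eq] at hjmem; omega) hj hw
    exact hle hN
  obtain ⟨w₀, hw₀⟩ := hW₀ne
  have hwmem : (f ^ k) w₀ ∈ Wseq W₀ f k := ⟨w₀, hw₀, rfl⟩
  have heq : (f ^ n) ((f ^ k) w₀) = (f ^ k) w₀ := hfix _ hwmem
  have hmem2 : (f ^ n) ((f ^ k) w₀) ∈ Wseq W₀ f (n + k) := by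
    refine ⟨w₀, hw₀, ?_⟩
    rw [zpow_add, Equiv.Perm.mul_apply]
  have hmem3 : (f ^ n) ((f ^ k) w₀) ∈ ⇑(f ^ (n + k - 1)) '' Y₀ := by
    rw [heq]
    have h1 : (f ^ k) w₀ ∈ ⇑(f ^ k) '' Y₀ := ⟨w₀, hW₀Y₀ hw₀, rfl⟩
    exact Ymono f (hY₀supp.trans hsuppY₁) (by omega) h1
  exact Wdisj_prev H₁ f hY₀supp hW₁ hmem2 hmem3

end Stmt14Aux

namespace Stmt14Aux

/-- Auxiliary subgroup: elements of the form `f ^ n * m` with `m ∈ M`. -/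
def Tsub {Z : Type*} (H₁ : Subgroup (Equiv.Perm Z)) (f : Equiv.Perm Z) :
    Subgroup (Equiv.Perm Z) where
  carrier := {v : Equiv.Perm Z | ∃ n : ℤ, ∃ m ∈ Mgrp H₁ f, v = f ^ n * m}
  one_mem' := ⟨0, 1, one_mem _, by simp⟩
  mul_mem' := by
    rintro a b ⟨n, m, hm, rfl⟩ ⟨n', m', hm', rfl⟩
    refine ⟨n + n', (f ^ n')⁻¹ * m * f ^ n' * m', mul_mem ?_ hm', by group⟩
    have := zpow_conj_M H₁ f (-n') hm
    simpa [zpow_neg] using this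
  inv_mem' := by
    rintro a ⟨n, m, hm, rfl⟩
    exact ⟨-n, f ^ n * m⁻¹ * (f ^ n)⁻¹, zpow_conj_M H₁ f n (inv_mem hm), by group⟩

end Stmt14Aux

/-- In the inductive setting, with `V = ⟨H₁, f⟩`: `V = ⟨M, f⟩`, `M` is
a normal subgroup of `V`, every element of `V` is `fⁿ·m` with `n ∈ ℤ`, `m ∈ M`,
`M ∩ ⟨f⟩ = 1`, and `f` has infinite order; thus `V` is the internal semidirect product
of `M` with the infinite cyclic group generated by `f`. -/
theorem stmt14 {Z : Type*} (H₁ : Subgroup (Equiv.Perm Z)) (f : Equiv.Perm Z)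
    (Y₀ W₀ : Set Z) (hsetting : InductiveSetting H₁ f Y₀ W₀) :
    H₁ ⊔ Subgroup.zpowers f = Mgrp H₁ f ⊔ Subgroup.zpowers f ∧
    Mgrp H₁ f ≤ H₁ ⊔ Subgroup.zpowers f ∧
    (∀ v ∈ H₁ ⊔ Subgroup.zpowers f, ∀ m ∈ Mgrp H₁ f, v * m * v⁻¹ ∈ Mgrp H₁ f) ∧
    (∀ v ∈ H₁ ⊔ Subgroup.zpowers f, ∃ n : ℤ, ∃ m ∈ Mgrp H₁ f, v = f ^ n * m) ∧
    Mgrp H₁ f ⊓ Subgroup.zpowers f = ⊥ ∧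
    ¬ IsOfFinOrder f := by
  obtain ⟨hpw, hY₀supp, hsuppY₁, hsuppne, hW₀ne, hW₀Y₀, hW₁⟩ := hsetting
  have hMleV := Stmt14Aux.M_le_V H₁ f
  have hH₁M := Stmt14Aux.H₁_le_M H₁ f
  refine ⟨?_, hMleV, ?_, ?_, ?_, ?_⟩
  · apply le_antisymm
    · exact sup_le (hH₁M.trans le_sup_left) le_sup_right
    · exact sup_le hMleV le_sup_right
  · intro v hv m hm
    have hVnorm : H₁ ⊔ Subgroup.zpowers f ≤ Subgroup.normalizer (Mgrp H₁ f : Set (Equiv.Perm Z)) :=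
      sup_le (hH₁M.trans Subgroup.le_normalizer)
        (Subgroup.zpowers_le.2 (Stmt14Aux.f_mem_normalizer H₁ f))
    exact (Subgroup.mem_normalizer_iff.1 (hVnorm hv) m).1 hm
  · intro v hv
    have hle : H₁ ⊔ Subgroup.zpowers f ≤ Stmt14Aux.Tsub H₁ f := by
      refine sup_le ?_ ?_
      · intro h hh
        exact ⟨0, h, hH₁M hh, by simp⟩
      · intro x hx
        obtain ⟨n, rfl⟩ := Subgroup.mem_zpowers_iff.1 hx
        exact ⟨n, 1, one_mem _, (mul_one _).symm⟩
    exact hle hv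
  · rw [eq_bot_iff]
    intro x hx
    rw [Subgroup.mem_inf] at hx
    obtain ⟨hxM, hxz⟩ := hx
    obtain ⟨n, rfl⟩ := Subgroup.mem_zpowers_iff.1 hxz
    rcases lt_trichotomy n 0 with h | h | h
    · exfalso
      have hinv : f ^ (-n) ∈ Mgrp H₁ f := by
        simpa [zpow_neg] using inv_mem hxM
      exact Stmt14Aux.fn_not_mem_M H₁ f hY₀supp hsuppY₁ hW₀ne hW₀Y₀ hW₁ (by omega) hinv
    · simp [h, Subgroup.mem_bot]
    · exact absurd hxM (Stmt14Aux.fn_not_mem_M H₁ f hY₀supp hsuppY₁ hW₀ne hW₀Y₀ hW₁ h)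
  · intro hfin
    obtain ⟨n, hnpos, hfn⟩ := isOfFinOrder_iff_pow_eq_one.1 hfin
    obtain ⟨z, hz1, hz2⟩ := Set.exists_of_ssubset (hsuppY₁.ssubset_of_ne hsuppne)
    have hz1' : z ∈ ⇑(f ^ (1 : ℤ)) '' Y₀ := by simpa [zpow_one] using hz1
    have hzn : z ∈ ⇑(f ^ (n : ℤ)) '' Y₀ :=
      Stmt14Aux.Ymono f (hY₀supp.trans hsuppY₁) (by exact_mod_cast hnpos) hz1'
    have hz0 : z ∈ Y₀ := by
      rw [zpow_natCast, hfn] at hzn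
      simpa using hzn
    exact hz2 (hY₀supp hz0)
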